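/- Let γ ≥ 1 and p > q ≥ γ. For any Π in the quasi-Trefftz space QT_p (of order p for a differential operator L of order γ with sufficiently smooth coefficients), the truncated Taylor polynomial T_q Π belongs to QT_q. (In contrast, QT_q is in general not a subspace of QT_p.) -/

import Mathlib

open MvPolynomial

/-- Partial derivative of a function of `d` real variables in the `g`-th direction. -/
noncomputable def pdFun {d : ℕ} (g : Fin d) (f : (Fin d → ℝ) → ℝ) : (Fin d → ℝ) → ℝ :=
  fun x => fderiv ℝ f x (Pi.single g 1)

/-- Iterated partial derivative `∂^i = ∂_{x_1}^{i_1} ⋯ ∂_{x_d}^{i_d}` of a function. -/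
noncomputable def pdMulti {d : ℕ} (i : Fin d →₀ ℕ) (f : (Fin d → ℝ) → ℝ) : (Fin d → ℝ) → ℝ :=
  ((List.ofFn fun g : Fin d => (pdFun g)^[i g]).foldr (· ∘ ·) id) f

/-- The finset of multi-indices of length `d` and total degree at most `k`. -/
noncomputable def degLE (d k : ℕ) : Finset (Fin d →₀ ℕ) :=
  (Finset.Iic (Finsupp.equivFunOnFinite.symm fun _ : Fin d => k)).filter fun j => (∑ g, j g) ≤ k

/-- The differential operator `L = ∑_{|j| ≤ γ} c_j(x) ∂^j` applied to `f`. -/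
noncomputable def applyL {d : ℕ} (γ : ℕ) (c : (Fin d →₀ ℕ) → (Fin d → ℝ) → ℝ)
    (f : (Fin d → ℝ) → ℝ) : (Fin d → ℝ) → ℝ :=
  fun x => ∑ j ∈ degLE d γ, c j x * pdMulti j f x

/-- The order-`k` Taylor polynomial of `f` at `x0`, as a function:
`∑_{|i| ≤ k} (1/i!) ∂^i f(x0) (x − x0)^i`. -/
noncomputable def taylorFun {d : ℕ} (x0 : Fin d → ℝ) (k : ℕ) (f : (Fin d → ℝ) → ℝ) :
    (Fin d → ℝ) → ℝ :=
  fun x => ∑ i ∈ degLE d k,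
    (pdMulti i f x0 / ∏ g, ((i g).factorial : ℝ)) * ∏ g, (x g - x0 g) ^ i g


noncomputable def pdMPoly {d : ℕ} (i : Fin d →₀ ℕ) (P : MvPolynomial (Fin d) ℝ) :
    MvPolynomial (Fin d) ℝ :=
  ((List.ofFn fun g : Fin d => (fun Q => pderiv g Q)^[i g]).foldr (· ∘ ·) id) P

lemma coeff_pderiv {d : ℕ} (g : Fin d) (m : Fin d →₀ ℕ) (Q : MvPolynomial (Fin d) ℝ) :
    coeff m (pderiv g Q) = ((m g : ℝ) + 1) * coeff (m + Finsupp.single g 1) Q := by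
  induction Q using MvPolynomial.induction_on' with
  | monomial s a =>
    rw [pderiv_monomial, coeff_monomial, coeff_monomial]
    by_cases h2 : s = m + Finsupp.single g 1
    · subst h2
      rw [if_pos (add_tsub_cancel_right _ _)]
      simp [Finsupp.add_apply, Finsupp.single_eq_same]
      push_cast
      ring
    · rw [if_neg h2]
      by_cases h1 : s - Finsupp.single g 1 = m
      · rcases Nat.eq_zero_or_pos (s g) with hz | hpos
        · simp [if_pos h1, hz]
        · exfalso
          apply h2
          rw [← h1, tsub_add_cancel_of_le]
          rwa [Finsupp.single_le_iff]
      · simp [if_neg h1]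
  | add p q hp hq => simp [hp, hq, mul_add]

lemma coeff_pderiv_iterate {d : ℕ} (g : Fin d) (k : ℕ) :
    ∀ (m : Fin d →₀ ℕ) (Q : MvPolynomial (Fin d) ℝ),
    coeff m ((fun Q => pderiv g Q)^[k] Q)
      = (((m g + k).factorial : ℝ) / (m g).factorial) * coeff (m + Finsupp.single g k) Q := by
  induction k with
  | zero =>
    intro m Q
    simp [div_self (Nat.cast_ne_zero.mpr (Nat.factorial_ne_zero (m g)) : ((m g).factorial:ℝ) ≠ 0)]
  | succ n ih =>
    intro m Q
    rw [Function.iterate_succ_apply, ih, coeff_pderiv]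
    have h1 : (m + Finsupp.single g n) g = m g + n := by
      simp [Finsupp.add_apply, Finsupp.single_eq_same]
    have h2 : m + Finsupp.single g n + Finsupp.single g 1 = m + Finsupp.single g (n + 1) := by
      rw [add_assoc, ← Finsupp.single_add]
    rw [h1, h2]
    rw [show m g + (n + 1) = (m g + n) + 1 from rfl, Nat.factorial_succ]
    have hne : ((m g).factorial : ℝ) ≠ 0 := Nat.cast_ne_zero.mpr (Nat.factorial_ne_zero _)
    push_cast
    field_simp

lemma coeff_foldr {d : ℕ} (l : List (Fin d × ℕ)) (hl : l.Pairwise fun a b => a.1 ≠ b.1)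
    (m : Fin d →₀ ℕ) (Q : MvPolynomial (Fin d) ℝ) :
    coeff m (((l.map fun p => (fun Q => pderiv p.1 Q)^[p.2]).foldr (· ∘ ·) id) Q)
      = (l.map fun p => (((m p.1 + p.2).factorial : ℝ) / (m p.1).factorial)).prod
        * coeff (m + (l.map fun p => Finsupp.single p.1 p.2).sum) Q := by
  induction l generalizing m with
  | nil => simp
  | cons p l ih =>
    rcases List.pairwise_cons.mp hl with ⟨hp, hl'⟩
    simp only [List.map_cons, List.foldr_cons, Function.comp_apply, List.prod_cons,
      List.sum_cons]
    rw [coeff_pderiv_iterate, ih hl']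
    have hmm : ∀ p' ∈ l, (m + Finsupp.single p.1 p.2) p'.1 = m p'.1 := by
      intro p' hp'
      simp [Finsupp.add_apply, Finsupp.single_apply, hp p' hp']
    have hprod : (l.map fun p' => ((((m + Finsupp.single p.1 p.2) p'.1 + p'.2).factorial : ℝ)
        / ((m + Finsupp.single p.1 p.2) p'.1).factorial)).prod
        = (l.map fun p' => (((m p'.1 + p'.2).factorial : ℝ) / (m p'.1).factorial)).prod := by
      congr 1
      exact List.map_congr_left fun p' hp' => by rw [hmm p' hp']
    rw [hprod, add_assoc]
    ring


lemma finsupp_sum_single {d : ℕ} (i : Fin d →₀ ℕ) :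
    (∑ g : Fin d, Finsupp.single g (i g)) = i := by
  ext a
  rw [Finsupp.finset_sum_apply]
  simp [Finsupp.single_apply]

lemma coeff_pdMPoly {d : ℕ} (i m : Fin d →₀ ℕ) (Q : MvPolynomial (Fin d) ℝ) :
    coeff m (pdMPoly i Q)
      = (∏ g : Fin d, (((m g + i g).factorial : ℝ) / (m g).factorial)) * coeff (m + i) Q := by
  have h := coeff_foldr (List.ofFn fun g : Fin d => (g, i g))
    (List.pairwise_ofFn.mpr fun a b hab => by
      simpa using (Fin.ne_of_lt hab))
    m Q
  rw [List.map_ofFn, List.map_ofFn, List.map_ofFn] at h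
  unfold pdMPoly
  have h2 : (List.ofFn ((fun p : Fin d × ℕ => Finsupp.single p.1 p.2) ∘ fun g => (g, i g))).sum
      = i := by
    rw [List.sum_ofFn]
    exact finsupp_sum_single i
  rw [show (List.ofFn ((fun p : Fin d × ℕ => (fun Q => (pderiv p.1) Q)^[p.2]) ∘ fun g => (g, i g)))
      = (List.ofFn fun g : Fin d => (fun Q => (pderiv g) Q)^[i g]) from rfl] at h
  rw [h, h2, List.prod_ofFn]
  rfl

lemma pdMPoly_zero {d : ℕ} (Q : MvPolynomial (Fin d) ℝ) : pdMPoly 0 Q = Q := by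
  apply MvPolynomial.ext
  intro m
  rw [coeff_pdMPoly]
  simp [div_self (Nat.cast_ne_zero.mpr (Nat.factorial_ne_zero _) : ((_ : ℕ).factorial:ℝ) ≠ 0)]

lemma pdMPoly_single {d : ℕ} (g : Fin d) (Q : MvPolynomial (Fin d) ℝ) :
    pdMPoly (Finsupp.single g 1) Q = pderiv g Q := by
  apply MvPolynomial.ext
  intro m
  rw [coeff_pdMPoly, coeff_pderiv]
  congr 1
  rw [Finset.prod_eq_single g]
  · simp [Nat.factorial_succ]
    rw [mul_div_assoc, div_self (Nat.cast_ne_zero.mpr (Nat.factorial_ne_zero _)), mul_one]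
  · intro b _ hb
    simp [Finsupp.single_apply, (Ne.symm hb : g ≠ b),
      div_self (Nat.cast_ne_zero.mpr (Nat.factorial_ne_zero _) : ((_ : ℕ).factorial:ℝ) ≠ 0)]
  · simp

lemma pdMPoly_pdMPoly {d : ℕ} (i j : Fin d →₀ ℕ) (Q : MvPolynomial (Fin d) ℝ) :
    pdMPoly i (pdMPoly j Q) = pdMPoly (j + i) Q := by
  apply MvPolynomial.ext
  intro m
  rw [coeff_pdMPoly, coeff_pdMPoly, coeff_pdMPoly]
  rw [← mul_assoc, ← Finset.prod_mul_distrib]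
  have : m + i + j = m + (j + i) := by rw [add_assoc, add_comm i j]
  rw [this]
  congr 1
  apply Finset.prod_congr rfl
  intro g _
  have h1 : ((m g + i g).factorial : ℝ) ≠ 0 := Nat.cast_ne_zero.mpr (Nat.factorial_ne_zero _)
  have h2 : (m + i) g = m g + i g := by simp [Finsupp.add_apply]
  rw [h2]
  rw [div_mul_div_comm]
  rw [mul_comm ((m g + i g).factorial : ℝ) _]
  rw [show m g + (j + i) g = m g + i g + j g from by simp [Finsupp.add_apply]; omega]
  rw [mul_div_mul_right _ _ h1]

lemma pdMPoly_add {d : ℕ} (i : Fin d →₀ ℕ) (Q R : MvPolynomial (Fin d) ℝ) :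
    pdMPoly i (Q + R) = pdMPoly i Q + pdMPoly i R := by
  apply MvPolynomial.ext
  intro m
  simp [coeff_pdMPoly, mul_add]

lemma pdMPoly_sub {d : ℕ} (i : Fin d →₀ ℕ) (Q R : MvPolynomial (Fin d) ℝ) :
    pdMPoly i (Q - R) = pdMPoly i Q - pdMPoly i R := by
  apply MvPolynomial.ext
  intro m
  simp [coeff_pdMPoly, mul_sub]

lemma pdMPoly_pderiv {d : ℕ} (i : Fin d →₀ ℕ) (g : Fin d) (Q : MvPolynomial (Fin d) ℝ) :
    pdMPoly i (pderiv g Q) = pdMPoly (i + Finsupp.single g 1) Q := by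
  rw [← pdMPoly_single g Q, pdMPoly_pdMPoly, add_comm]

lemma forall₂_ofFn {n : ℕ} {α β : Type*} (f : Fin n → α) (g : Fin n → β) (R : α → β → Prop)
    (h : ∀ i, R (f i) (g i)) : List.Forall₂ R (List.ofFn f) (List.ofFn g) := by
  rw [List.forall₂_iff_get]
  refine ⟨by simp, fun i h1 h2 => ?_⟩
  rw [List.get_ofFn, List.get_ofFn]
  exact h _

lemma iterate_comm_map {A B : Type*} (Φ : A → B) (F : A → A) (G : B → B)
    (h : ∀ a, G (Φ a) = Φ (F a)) : ∀ (k : ℕ) (a : A), G^[k] (Φ a) = Φ (F^[k] a) := by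
  intro k
  induction k with
  | zero => intro a; rfl
  | succ n ih =>
    intro a
    rw [Function.iterate_succ_apply, Function.iterate_succ_apply, h, ih]

lemma foldr_comm_map {A B : Type*} (Φ : A → B) :
    ∀ {LA : List (A → A)} {LB : List (B → B)},
    List.Forall₂ (fun F G => ∀ a, G (Φ a) = Φ (F a)) LA LB →
    ∀ a, (LB.foldr (· ∘ ·) id) (Φ a) = Φ ((LA.foldr (· ∘ ·) id) a) := by
  intro LA LB h
  induction h with
  | nil => intro a; rfl
  | cons hFG _ ih =>
    intro a
    simp only [List.foldr_cons, Function.comp_apply]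
    rw [ih, hFG]

noncomputable def sh {d : ℕ} (x0 : Fin d → ℝ) : MvPolynomial (Fin d) ℝ → MvPolynomial (Fin d) ℝ :=
  fun Q => aeval (fun g : Fin d => X g + C (x0 g)) Q

lemma eval_zero_sh {d : ℕ} (x0 : Fin d → ℝ) (Q : MvPolynomial (Fin d) ℝ) :
    eval (0 : Fin d → ℝ) (sh x0 Q) = eval x0 Q := by
  induction Q using MvPolynomial.induction_on with
  | C a => simp [sh]
  | add p q hp hq => simp [sh, map_add] at hp hq ⊢; rw [hp, hq]
  | mul_X p n hp =>
    simp only [sh] at hp ⊢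
    rw [map_mul, map_mul, aeval_X, map_mul, hp, map_add, eval_X, eval_X, eval_C]
    simp

lemma pderiv_sh {d : ℕ} (x0 : Fin d → ℝ) (g : Fin d) (Q : MvPolynomial (Fin d) ℝ) :
    pderiv g (sh x0 Q) = sh x0 (pderiv g Q) := by
  induction Q using MvPolynomial.induction_on with
  | C a => simp [sh, pderiv_C]
  | add p q hp hq => simp only [sh, map_add] at hp hq ⊢; rw [hp, hq]
  | mul_X p n hp =>
    simp only [sh, map_mul, aeval_X, pderiv_mul, map_add] at hp ⊢
    rw [hp]
    rcases eq_or_ne g n with rfl | hgn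
    · simp [pderiv_X_self, pderiv_C]
    · simp [pderiv_X_of_ne (Ne.symm hgn), pderiv_C]

lemma pdMPoly_sh {d : ℕ} (x0 : Fin d → ℝ) (i : Fin d →₀ ℕ) (Q : MvPolynomial (Fin d) ℝ) :
    pdMPoly i (sh x0 Q) = sh x0 (pdMPoly i Q) := by
  unfold pdMPoly
  exact foldr_comm_map (sh x0)
    (forall₂_ofFn _ _ _ fun g => iterate_comm_map (sh x0) _ _ (pderiv_sh x0 g) (i g)) Q

lemma eval_zero_pdMPoly {d : ℕ} (i : Fin d →₀ ℕ) (Q : MvPolynomial (Fin d) ℝ) :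
    eval (0 : Fin d → ℝ) (pdMPoly i Q) = (∏ g : Fin d, ((i g).factorial : ℝ)) * coeff i Q := by
  have h0 : eval (0 : Fin d → ℝ) (pdMPoly i Q) = coeff 0 (pdMPoly i Q) := by
    rw [eval_zero]
    rfl
  rw [h0, coeff_pdMPoly]
  simp

lemma eval_x0_pdMPoly {d : ℕ} (x0 : Fin d → ℝ) (i : Fin d →₀ ℕ) (Q : MvPolynomial (Fin d) ℝ) :
    eval x0 (pdMPoly i Q) = (∏ g : Fin d, ((i g).factorial : ℝ)) * coeff i (sh x0 Q) := by
  rw [← eval_zero_sh x0, ← pdMPoly_sh, eval_zero_pdMPoly]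

lemma mem_degLE {d k : ℕ} {i : Fin d →₀ ℕ} : i ∈ degLE d k ↔ (∑ g, i g) ≤ k := by
  unfold degLE
  rw [Finset.mem_filter, Finset.mem_Iic]
  constructor
  · exact fun h => h.2
  · intro h
    refine ⟨?_, h⟩
    rw [Finsupp.le_def]
    intro a
    calc i a ≤ ∑ g, i g := Finset.single_le_sum (fun _ _ => Nat.zero_le _) (Finset.mem_univ a)
    _ ≤ k := h

lemma analyticAt_eval {d : ℕ} (P : MvPolynomial (Fin d) ℝ) (x : Fin d → ℝ) :
    AnalyticAt ℝ (fun y : Fin d → ℝ => eval y P) x :=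
  AnalyticOnNhd.eval_mvPolynomial P x (Set.mem_univ x)

lemma differentiableAt_eval {d : ℕ} (P : MvPolynomial (Fin d) ℝ) (x : Fin d → ℝ) :
    DifferentiableAt ℝ (fun y : Fin d → ℝ => eval y P) x :=
  (analyticAt_eval P x).differentiableAt

lemma contDiffOn_eval {d : ℕ} (P : MvPolynomial (Fin d) ℝ) (U : Set (Fin d → ℝ))
    {n : WithTop ℕ∞} : ContDiffOn ℝ n (fun y : Fin d → ℝ => eval y P) U :=
  ((AnalyticOnNhd.eval_mvPolynomial P).mono (Set.subset_univ U)).contDiffOn_of_completeSpace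

lemma hasFDerivAt_eval {d : ℕ} (P : MvPolynomial (Fin d) ℝ) (x : Fin d → ℝ) :
    HasFDerivAt (fun y : Fin d → ℝ => eval y P)
      (∑ g : Fin d, eval x (pderiv g P) •
        (ContinuousLinearMap.proj g : ((Fin d → ℝ) →L[ℝ] ℝ))) x := by
  induction P using MvPolynomial.induction_on with
  | C a =>
    simp only [eval_C, pderiv_C, map_zero, zero_smul, Finset.sum_const_zero]
    exact hasFDerivAt_const a x
  | add p q hp hq =>
    simp only [map_add]
    have he : (∑ g : Fin d, ((eval x) ((pderiv g) p) + (eval x) ((pderiv g) q)) •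
        (ContinuousLinearMap.proj g : ((Fin d → ℝ) →L[ℝ] ℝ)))
        = (∑ g : Fin d, eval x (pderiv g p) •
            (ContinuousLinearMap.proj g : ((Fin d → ℝ) →L[ℝ] ℝ)))
          + ∑ g : Fin d, eval x (pderiv g q) •
            (ContinuousLinearMap.proj g : ((Fin d → ℝ) →L[ℝ] ℝ)) := by
      rw [← Finset.sum_add_distrib]
      exact Finset.sum_congr rfl fun g _ => add_smul _ _ _
    rw [he]
    exact hp.add hq
  | mul_X p n hp =>
    have hX : HasFDerivAt (fun y : Fin d → ℝ => y n)
        (ContinuousLinearMap.proj n : ((Fin d → ℝ) →L[ℝ] ℝ)) x :=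
      (ContinuousLinearMap.proj n : ((Fin d → ℝ) →L[ℝ] ℝ)).hasFDerivAt
    have h := hp.mul hX
    have hfun : (fun y : Fin d → ℝ => eval y (p * X n)) = fun y => eval y p * y n := by
      funext y
      rw [map_mul, eval_X]
    rw [hfun]
    have he : (∑ g : Fin d, eval x (pderiv g (p * X n)) •
        (ContinuousLinearMap.proj g : ((Fin d → ℝ) →L[ℝ] ℝ)))
        = eval x p • (ContinuousLinearMap.proj n : ((Fin d → ℝ) →L[ℝ] ℝ))
          + x n • ∑ g : Fin d, eval x (pderiv g p) •
            (ContinuousLinearMap.proj g : ((Fin d → ℝ) →L[ℝ] ℝ)) := by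
      apply ContinuousLinearMap.ext
      intro v
      have hXg : ∀ g : Fin d, eval x (pderiv g (X n : MvPolynomial (Fin d) ℝ))
          = if g = n then 1 else 0 := by
        intro g
        rcases eq_or_ne g n with rfl | hgn
        · simp [pderiv_X_self]
        · simp [pderiv_X_of_ne (Ne.symm hgn), hgn]
      simp only [ContinuousLinearMap.sum_apply, ContinuousLinearMap.smul_apply,
        ContinuousLinearMap.proj_apply, ContinuousLinearMap.add_apply, smul_eq_mul,
        pderiv_mul, map_add, map_mul, eval_X, hXg]
      simp only [add_mul]
      rw [Finset.sum_add_distrib]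
      have h1 : (∑ g : Fin d, eval x (pderiv g p) * x n * v g)
          = x n * ∑ g : Fin d, eval x (pderiv g p) * v g := by
        rw [Finset.mul_sum]
        exact Finset.sum_congr rfl fun g _ => by ring
      have h2 : (∑ g : Fin d, (eval x p * if g = n then (1:ℝ) else 0) * v g)
          = eval x p * v n := by
        rw [Finset.sum_eq_single n]
        · simp
        · intro b _ hb
          simp [hb]
        · simp
      rw [h1, h2]
      ring
    rw [he]
    exact h

lemma pdFun_eval {d : ℕ} (g : Fin d) (P : MvPolynomial (Fin d) ℝ) :
    pdFun g (fun x => eval x P) = fun x => eval x (pderiv g P) := by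
  funext x
  unfold pdFun
  rw [(hasFDerivAt_eval P x).fderiv]
  simp only [ContinuousLinearMap.sum_apply, ContinuousLinearMap.smul_apply,
    ContinuousLinearMap.proj_apply, smul_eq_mul, Pi.single_apply, mul_ite, mul_one, mul_zero]
  rw [Finset.sum_ite_eq' Finset.univ g fun g' => eval x (pderiv g' P)]
  simp

lemma pdMulti_eval {d : ℕ} (i : Fin d →₀ ℕ) (P : MvPolynomial (Fin d) ℝ) :
    pdMulti i (fun x => eval x P) = fun x => eval x (pdMPoly i P) := by
  unfold pdMulti pdMPoly
  exact foldr_comm_map (fun P => (fun x => eval x P))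
    (forall₂_ofFn _ _ _ fun g =>
      iterate_comm_map (fun P => (fun x => eval x P)) _ _ (fun P => pdFun_eval g P) (i g)) P

lemma prod_factorial_ne_zero {d : ℕ} (i : Fin d →₀ ℕ) :
    (∏ g : Fin d, ((i g).factorial : ℝ)) ≠ 0 :=
  Finset.prod_ne_zero_iff.mpr fun g _ => Nat.cast_ne_zero.mpr (Nat.factorial_ne_zero _)

lemma univ_prod_X_pow {d : ℕ} (i : Fin d →₀ ℕ) :
    (∏ g : Fin d, (X g : MvPolynomial (Fin d) ℝ) ^ (i g)) = monomial i 1 := by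
  rw [← prod_X_pow_eq_monomial]
  symm
  apply Finset.prod_subset (Finset.subset_univ _)
  intro x _ hx
  rw [Finsupp.notMem_support_iff.mp hx, pow_zero]

noncomputable def Tpoly {d : ℕ} (x0 : Fin d → ℝ) (k : ℕ) (P : MvPolynomial (Fin d) ℝ) :
    MvPolynomial (Fin d) ℝ :=
  ∑ i ∈ degLE d k, C (eval x0 (pdMPoly i P) / ∏ g, ((i g).factorial : ℝ))
    * ∏ g, (X g - C (x0 g)) ^ i g

lemma taylorFun_eval {d : ℕ} (x0 : Fin d → ℝ) (k : ℕ) (P : MvPolynomial (Fin d) ℝ) :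
    taylorFun x0 k (fun x => eval x P) = fun x => eval x (Tpoly x0 k P) := by
  funext x
  unfold taylorFun Tpoly
  rw [map_sum]
  apply Finset.sum_congr rfl
  intro i _
  rw [map_mul, eval_C, map_prod]
  rw [congrFun (pdMulti_eval i P) x0]
  apply congrArg
  apply Finset.prod_congr rfl
  intro g _
  rw [map_pow, map_sub, eval_X, eval_C]

lemma sh_Tpoly_coeff {d : ℕ} (x0 : Fin d → ℝ) (k : ℕ) (P : MvPolynomial (Fin d) ℝ)
    {i : Fin d →₀ ℕ} (hik : i ∈ degLE d k) :
    coeff i (sh x0 (Tpoly x0 k P)) = coeff i (sh x0 P) := by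
  have hsh : sh x0 (Tpoly x0 k P)
      = ∑ i' ∈ degLE d k, monomial i' (eval x0 (pdMPoly i' P) / ∏ g, ((i' g).factorial : ℝ)) := by
    unfold sh Tpoly
    rw [map_sum]
    apply Finset.sum_congr rfl
    intro i' _
    rw [map_mul, aeval_C, map_prod]
    have : ∀ g : Fin d, (aeval fun g : Fin d => X g + C (x0 g)) ((X g - C (x0 g)) ^ i' g)
        = (X g : MvPolynomial (Fin d) ℝ) ^ i' g := by
      intro g
      rw [map_pow, map_sub, aeval_X, aeval_C]
      congr 1
      rw [algebraMap_eq, add_sub_cancel_right]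
    rw [Finset.prod_congr rfl fun g _ => this g, univ_prod_X_pow, algebraMap_eq, C_mul_monomial,
      mul_one]
  rw [hsh, coeff_sum]
  rw [Finset.sum_eq_single i]
  · rw [coeff_monomial, if_pos rfl, eval_x0_pdMPoly,
      mul_div_cancel_left₀ _ (prod_factorial_ne_zero i)]
  · intro b _ hb
    rw [coeff_monomial, if_neg hb]
  · intro h
    exact absurd hik h

lemma vanish_Tpoly {d : ℕ} (x0 : Fin d → ℝ) (k : ℕ) (P : MvPolynomial (Fin d) ℝ)
    (i : Fin d →₀ ℕ) (hik : (∑ g, i g) ≤ k) :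
    eval x0 (pdMPoly i (Tpoly x0 k P - P)) = 0 := by
  rw [eval_x0_pdMPoly]
  have hsub : sh x0 (Tpoly x0 k P - P) = sh x0 (Tpoly x0 k P) - sh x0 P := by
    unfold sh
    rw [map_sub]
  rw [hsub, coeff_sub, sh_Tpoly_coeff x0 k P (mem_degLE.mpr hik), sub_self, mul_zero]

lemma taylorFun_coeff_zero {d : ℕ} (x0 : Fin d → ℝ) (k : ℕ) (F : (Fin d → ℝ) → ℝ)
    (hF : taylorFun x0 k F = 0) :
    ∀ i : Fin d →₀ ℕ, (∑ g, i g) ≤ k → pdMulti i F x0 = 0 := by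
  intro i hik
  set W : MvPolynomial (Fin d) ℝ :=
    ∑ i' ∈ degLE d k, monomial i' (pdMulti i' F x0 / ∏ g, ((i' g).factorial : ℝ)) with hW
  have hevalW : ∀ y : Fin d → ℝ, eval y W = 0 := by
    intro y
    have h := congrFun hF (fun g => y g + x0 g)
    simp only [taylorFun, Pi.zero_apply] at h
    rw [hW, map_sum]
    rw [← h]
    apply Finset.sum_congr rfl
    intro i' _
    rw [eval_monomial]
    rw [Finsupp.prod_fintype _ _ (fun g => pow_zero (y g))]
    simp
  have hW0 : W = 0 := MvPolynomial.funext (by simpa using hevalW)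
  have hcoeff : coeff i W = pdMulti i F x0 / ∏ g, ((i g).factorial : ℝ) := by
    rw [hW, coeff_sum]
    rw [Finset.sum_eq_single i]
    · rw [coeff_monomial, if_pos rfl]
    · intro b _ hb
      rw [coeff_monomial, if_neg hb]
    · intro h
      exact absurd (mem_degLE.mpr hik) h
  rw [hW0] at hcoeff
  simp only [coeff_zero] at hcoeff
  have := hcoeff.symm
  rw [div_eq_zero_iff] at this
  rcases this with h | h
  · exact h
  · exact absurd h (prod_factorial_ne_zero i)


/-! ### Analysis machinery -/

noncomputable def sumF {d : ℕ} (L : List ((((Fin d → ℝ) → ℝ)) × MvPolynomial (Fin d) ℝ)) :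
    (Fin d → ℝ) → ℝ :=
  fun x => (L.map fun p => p.1 x * eval x p.2).sum

lemma sumF_nil {d : ℕ} : sumF (d := d) [] = fun _ => 0 := rfl

lemma sumF_cons {d : ℕ} (p) (L : List ((((Fin d → ℝ) → ℝ)) × MvPolynomial (Fin d) ℝ)) :
    sumF (p :: L) = fun y => p.1 y * eval y p.2 + sumF L y := rfl

lemma sumF_append {d : ℕ} (A B : List ((((Fin d → ℝ) → ℝ)) × MvPolynomial (Fin d) ℝ)) (x) :
    sumF (A ++ B) x = sumF A x + sumF B x := by
  unfold sumF
  rw [List.map_append, List.sum_append]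

lemma differentiableAt_sumF {d : ℕ} (L : List ((((Fin d → ℝ) → ℝ)) × MvPolynomial (Fin d) ℝ))
    (x : Fin d → ℝ) (hL : ∀ p ∈ L, DifferentiableAt ℝ p.1 x) :
    DifferentiableAt ℝ (sumF L) x := by
  induction L with
  | nil => rw [sumF_nil]; exact differentiableAt_const 0
  | cons p L ih =>
    rw [sumF_cons]
    exact (((hL p List.mem_cons_self).mul (differentiableAt_eval p.2 x)).add
      (ih fun p' hp' => hL p' (List.mem_cons_of_mem _ hp')))

noncomputable def stepL {d : ℕ} (gg : Fin d)
    (L : List ((((Fin d → ℝ) → ℝ)) × MvPolynomial (Fin d) ℝ)) :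
    List ((((Fin d → ℝ) → ℝ)) × MvPolynomial (Fin d) ℝ) :=
  (L.map fun p => (pdFun gg p.1, p.2)) ++ (L.map fun p => (p.1, pderiv gg p.2))

lemma pdFun_sumF {d : ℕ} (gg : Fin d) (L : List ((((Fin d → ℝ) → ℝ)) × MvPolynomial (Fin d) ℝ))
    (x : Fin d → ℝ) (hL : ∀ p ∈ L, DifferentiableAt ℝ p.1 x) :
    pdFun gg (sumF L) x = sumF (stepL gg L) x := by
  induction L with
  | nil =>
    rw [sumF_nil]
    show fderiv ℝ (fun _ => (0:ℝ)) x (Pi.single gg 1) = sumF (stepL gg []) x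
    rw [fderiv_const_apply]
    rfl
  | cons p L ih =>
    have hp := hL p List.mem_cons_self
    have hL' : ∀ p' ∈ L, DifferentiableAt ℝ p'.1 x := fun p' hp' => hL p' (List.mem_cons_of_mem _ hp')
    show fderiv ℝ (sumF (p :: L)) x (Pi.single gg 1) = _
    rw [sumF_cons]
    rw [fderiv_fun_add (f := fun y => p.1 y * eval y p.2) (hp.mul (differentiableAt_eval p.2 x)) (differentiableAt_sumF L x hL')]
    rw [ContinuousLinearMap.add_apply]
    rw [fderiv_fun_mul hp (differentiableAt_eval p.2 x)]
    have h1 : (fderiv ℝ (fun y => eval y p.2) x) (Pi.single gg 1) = eval x (pderiv gg p.2) :=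
      congrFun (pdFun_eval gg p.2) x
    have h2 : (fderiv ℝ (sumF L) x) (Pi.single gg 1) = sumF (stepL gg L) x := ih hL'
    rw [ContinuousLinearMap.add_apply, ContinuousLinearMap.smul_apply,
      ContinuousLinearMap.smul_apply, h1, h2]
    have hr : ∀ y, sumF (stepL gg (p :: L)) y
        = (pdFun gg p.1 y * eval y p.2 + p.1 y * eval y (pderiv gg p.2)) + sumF (stepL gg L) y := by
      intro y
      unfold stepL
      simp only [List.map_cons]
      rw [List.cons_append, sumF_cons]
      dsimp only
      have : sumF ((L.map fun p => (pdFun gg p.1, p.2)) ++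
          ((p.1, pderiv gg p.2) :: L.map fun p => (p.1, pderiv gg p.2))) y
          = sumF (L.map fun p => (pdFun gg p.1, p.2)) y
            + (p.1 y * eval y (pderiv gg p.2)
              + sumF (L.map fun p => (p.1, pderiv gg p.2)) y) := by
        rw [sumF_append, sumF_cons]
      rw [this, sumF_append]
      ring
    rw [hr x]
    have hpd : pdFun gg p.1 x = (fderiv ℝ p.1 x) (Pi.single gg 1) := rfl
    rw [hpd]
    simp only [smul_eq_mul]
    ring

def Vanish {d : ℕ} (x0 : Fin d → ℝ) (r : ℕ) (S : MvPolynomial (Fin d) ℝ) : Prop :=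
  ∀ i : Fin d →₀ ℕ, (∑ g, i g) ≤ r → eval x0 (pdMPoly i S) = 0

def Good {d : ℕ} (x0 : Fin d → ℝ) (m r : ℕ) (gf h : (Fin d → ℝ) → ℝ) : Prop :=
  ∃ U : Set (Fin d → ℝ), IsOpen U ∧ x0 ∈ U ∧
    ∃ L L' : List ((((Fin d → ℝ) → ℝ)) × MvPolynomial (Fin d) ℝ),
      (∀ p ∈ L, ContDiffOn ℝ m p.1 U) ∧ (∀ p ∈ L', ContDiffOn ℝ m p.1 U) ∧
      (∀ p ∈ L', Vanish x0 r p.2) ∧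
      (∀ x ∈ U, gf x = sumF L x) ∧ (∀ x ∈ U, h x = gf x + sumF L' x)

lemma contDiffOn_pdFun {d : ℕ} {m : ℕ} {U : Set (Fin d → ℝ)} {f : (Fin d → ℝ) → ℝ} (g : Fin d)
    (hU : IsOpen U) (hf : ContDiffOn ℝ (m + 1 : ℕ) f U) : ContDiffOn ℝ m (pdFun g f) U := by
  have h' : ContDiffOn ℝ m (fun x => fderiv ℝ f x) U :=
    hf.fderiv_of_isOpen hU (by exact_mod_cast le_refl (m+1 : ℕ))
  exact h'.clm_apply contDiffOn_const

lemma diffAt_of_cdOn {d : ℕ} {m : ℕ} {U : Set (Fin d → ℝ)} {f : (Fin d → ℝ) → ℝ}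
    {x : Fin d → ℝ} (hU : IsOpen U) (hf : ContDiffOn ℝ (m + 1 : ℕ) f U) (hx : x ∈ U) :
    DifferentiableAt ℝ f x :=
  (hf.contDiffAt (hU.mem_nhds hx)).differentiableAt
    (by simp)

lemma pdFun_congr_on {d : ℕ} {U : Set (Fin d → ℝ)} {f f' : (Fin d → ℝ) → ℝ} {x : Fin d → ℝ}
    (gg : Fin d) (hU : IsOpen U) (hx : x ∈ U) (hfg : ∀ y ∈ U, f y = f' y) :
    pdFun gg f x = pdFun gg f' x := by
  unfold pdFun
  rw [Filter.EventuallyEq.fderiv_eq (Filter.eventuallyEq_of_mem (hU.mem_nhds hx) hfg)]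

lemma sumF_stepL_append {d : ℕ} (gg : Fin d)
    (A B : List ((((Fin d → ℝ) → ℝ)) × MvPolynomial (Fin d) ℝ)) (x : Fin d → ℝ) :
    sumF (stepL gg (A ++ B)) x = sumF (stepL gg A) x + sumF (stepL gg B) x := by
  unfold stepL
  simp only [List.map_append]
  rw [sumF_append, sumF_append, sumF_append, sumF_append, sumF_append]
  ring

lemma sum_single_one {d : ℕ} (gg : Fin d) : (∑ g : Fin d, Finsupp.single gg 1 g) = 1 := by
  simp [Finsupp.single_apply]

lemma Good.step {d : ℕ} {x0 : Fin d → ℝ} {m r : ℕ} {gf h : (Fin d → ℝ) → ℝ} (gg : Fin d)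
    (hG : Good x0 (m + 1) (r + 1) gf h) : Good x0 m r (pdFun gg gf) (pdFun gg h) := by
  obtain ⟨U, hUo, hx0, L, L', hLc, hL'c, hL'v, hg, hh⟩ := hG
  have hstep_c : ∀ (M : List ((((Fin d → ℝ) → ℝ)) × MvPolynomial (Fin d) ℝ)),
      (∀ p ∈ M, ContDiffOn ℝ (m + 1 : ℕ) p.1 U) → ∀ p ∈ stepL gg M, ContDiffOn ℝ m p.1 U := by
    intro M hM p hp
    rcases List.mem_append.mp hp with hp | hp
    · obtain ⟨p', hp', rfl⟩ := List.mem_map.mp hp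
      exact contDiffOn_pdFun gg hUo (hM p' hp')
    · obtain ⟨p', hp', rfl⟩ := List.mem_map.mp hp
      exact (hM p' hp').of_le (by exact_mod_cast Nat.le_succ m)
  have hdiff : ∀ (M : List ((((Fin d → ℝ) → ℝ)) × MvPolynomial (Fin d) ℝ)),
      (∀ p ∈ M, ContDiffOn ℝ (m + 1 : ℕ) p.1 U) →
      ∀ x ∈ U, ∀ p ∈ M, DifferentiableAt ℝ p.1 x := by
    intro M hM x hx p hp
    exact diffAt_of_cdOn hUo (hM p hp) hx
  refine ⟨U, hUo, hx0, stepL gg L, stepL gg L', hstep_c L hLc, hstep_c L' hL'c, ?_, ?_, ?_⟩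
  · -- Vanish
    intro p hp
    rcases List.mem_append.mp hp with hp | hp
    · obtain ⟨p', hp', rfl⟩ := List.mem_map.mp hp
      exact fun i hi => hL'v p' hp' i (hi.trans (Nat.le_succ r))
    · obtain ⟨p', hp', rfl⟩ := List.mem_map.mp hp
      intro i hi
      show eval x0 (pdMPoly i (pderiv gg p'.2)) = 0
      rw [pdMPoly_pderiv]
      apply hL'v p' hp'
      have : (∑ g, ((i + Finsupp.single gg 1) : Fin d →₀ ℕ) g) = (∑ g, i g) + 1 := by
        simp only [Finsupp.add_apply]
        rw [Finset.sum_add_distrib, sum_single_one]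
      omega
  · -- gf decomposition
    intro x hx
    rw [pdFun_congr_on gg hUo hx hg]
    exact pdFun_sumF gg L x (hdiff L hLc x hx)
  · -- h decomposition
    intro x hx
    have hhU : ∀ y ∈ U, h y = sumF (L ++ L') y := by
      intro y hy
      rw [hh y hy, hg y hy, sumF_append]
    rw [pdFun_congr_on gg hUo hx hhU]
    rw [pdFun_sumF gg (L ++ L') x (hdiff (L ++ L') ?hcd x hx)]
    case hcd =>
      intro p hp
      rcases List.mem_append.mp hp with hp | hp
      · exact hLc p hp
      · exact hL'c p hp
    rw [sumF_stepL_append]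
    congr 1
    rw [pdFun_congr_on gg hUo hx hg]
    exact (pdFun_sumF gg L x (hdiff L hLc x hx)).symm

lemma Good.eval_eq {d : ℕ} {x0 : Fin d → ℝ} {gf hf : (Fin d → ℝ) → ℝ}
    (h : Good x0 0 0 gf hf) : hf x0 = gf x0 := by
  obtain ⟨U, hUo, hx0, L, L', hLc, hL'c, hL'v, hg, hh⟩ := h
  rw [hh x0 hx0]
  suffices hz : sumF L' x0 = 0 by rw [hz, add_zero]
  unfold sumF
  apply List.sum_eq_zero
  intro a ha
  obtain ⟨p, hp, rfl⟩ := List.mem_map.mp ha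
  have : eval x0 p.2 = 0 := by
    have h0 := hL'v p hp 0 (by simp)
    rwa [pdMPoly_zero] at h0
  rw [this, mul_zero]

lemma Good.mono {d : ℕ} {x0 : Fin d → ℝ} {m r m' r' : ℕ} {gf hf : (Fin d → ℝ) → ℝ}
    (h : Good x0 m r gf hf) (hm : m' ≤ m) (hr : r' ≤ r) : Good x0 m' r' gf hf := by
  obtain ⟨U, hUo, hx0, L, L', hLc, hL'c, hL'v, hg, hh⟩ := h
  exact ⟨U, hUo, hx0, L, L',
    fun p hp => (hLc p hp).of_le (by exact_mod_cast hm),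
    fun p hp => (hL'c p hp).of_le (by exact_mod_cast hm),
    fun p hp i hi => hL'v p hp i (hi.trans hr), hg, hh⟩

def Dgood {d : ℕ} (x0 : Fin d → ℝ) (k : ℕ)
    (F : ((Fin d → ℝ) → ℝ) → ((Fin d → ℝ) → ℝ)) : Prop :=
  ∀ m r gf h, Good x0 (m + k) (r + k) gf h → Good x0 m r (F gf) (F h)

lemma dgood_id {d : ℕ} (x0 : Fin d → ℝ) : Dgood x0 0 id := fun m r gf h hg => by simpa using hg

lemma dgood_comp {d : ℕ} {x0 : Fin d → ℝ} {k j : ℕ} {F G : ((Fin d → ℝ) → ℝ) → ((Fin d → ℝ) → ℝ)}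
    (hF : Dgood x0 k F) (hG : Dgood x0 j G) : Dgood x0 (k + j) (F ∘ G) := by
  intro m r gf h hg
  apply hF m r
  apply hG (m + k) (r + k)
  have h1 : m + k + j = m + (k + j) := by omega
  have h2 : r + k + j = r + (k + j) := by omega
  rw [h1, h2]
  exact hg

lemma dgood_pdFun {d : ℕ} (x0 : Fin d → ℝ) (gg : Fin d) : Dgood x0 1 (pdFun gg) :=
  fun _ _ _ _ hg => Good.step gg hg

lemma dgood_iterate {d : ℕ} (x0 : Fin d → ℝ) (gg : Fin d) (k : ℕ) :
    Dgood x0 k ((pdFun gg)^[k]) := by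
  induction k with
  | zero => exact dgood_id x0
  | succ n ih =>
    have := dgood_comp ih (dgood_pdFun x0 gg)
    rwa [← Function.iterate_succ] at this

lemma dgood_foldr {d : ℕ} (x0 : Fin d → ℝ) :
    ∀ {Lf : List (((Fin d → ℝ) → ℝ) → ((Fin d → ℝ) → ℝ))} {Lw : List ℕ},
    List.Forall₂ (fun F k => Dgood x0 k F) Lf Lw → Dgood x0 Lw.sum (Lf.foldr (· ∘ ·) id) := by
  intro Lf Lw h
  induction h with
  | nil => exact dgood_id x0
  | cons hFk _ ih =>
    rw [List.sum_cons, List.foldr_cons]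
    exact dgood_comp hFk ih

lemma dgood_pdMulti {d : ℕ} (x0 : Fin d → ℝ) (i : Fin d →₀ ℕ) :
    Dgood x0 (∑ g, i g) (pdMulti i) := by
  have h := dgood_foldr x0
    (forall₂_ofFn (fun g : Fin d => (pdFun g)^[i g]) (fun g => i g)
      (fun F k => Dgood x0 k F) (fun g => dgood_iterate x0 g (i g)))
  rwa [List.sum_ofFn] at h

lemma Good.pdMulti_eq {d : ℕ} {x0 : Fin d → ℝ} {m r : ℕ} {gf hf : (Fin d → ℝ) → ℝ}
    (h : Good x0 m r gf hf) (i : Fin d →₀ ℕ) (him : (∑ g, i g) ≤ m) (hir : (∑ g, i g) ≤ r) :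
    pdMulti i hf x0 = pdMulti i gf x0 := by
  have h0 : Good x0 (0 + ∑ g, i g) (0 + ∑ g, i g) gf hf := h.mono (by omega) (by omega)
  exact Good.eval_eq (dgood_pdMulti x0 i 0 0 gf hf h0)

lemma sumF_finset {d : ℕ} (s : Finset (Fin d →₀ ℕ)) (c : (Fin d →₀ ℕ) → (Fin d → ℝ) → ℝ)
    (S : (Fin d →₀ ℕ) → MvPolynomial (Fin d) ℝ) (x : Fin d → ℝ) :
    sumF (s.toList.map fun j => (c j, S j)) x = ∑ j ∈ s, c j x * eval x (S j) := by
  unfold sumF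
  rw [List.map_map]
  exact Finset.sum_map_toList s _

/-- If `Π ∈ QT_p` then `T_q Π ∈ QT_q`, for `p > q ≥ γ`. -/
theorem stmt_15 {d : ℕ} (x0 : Fin d → ℝ) (γ p q : ℕ) (hγ : 1 ≤ γ) (hq : γ ≤ q) (hpq : q < p)
    (c : (Fin d →₀ ℕ) → (Fin d → ℝ) → ℝ)
    (hc : ∀ j ∈ degLE d γ, ContDiffAt ℝ (p - γ : ℕ) (c j) x0)
    (P : MvPolynomial (Fin d) ℝ) (hdeg : P.totalDegree ≤ p)
    (hQT : taylorFun x0 (p - γ) (applyL γ c (fun x => eval x P)) = 0) :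
    taylorFun x0 (q - γ) (applyL γ c (taylorFun x0 q (fun x => eval x P))) = 0 := by
  set M := q - γ with hM
  set T := Tpoly x0 q P with hT
  rw [taylorFun_eval x0 q P]
  have hMle : M ≤ p - γ := Nat.sub_le_sub_right hpq.le γ
  -- Good
  have hUj : ∀ j : Fin d →₀ ℕ, ∃ V : Set (Fin d → ℝ), IsOpen V ∧ x0 ∈ V ∧
      (j ∈ degLE d γ → ContDiffOn ℝ (M : ℕ) (c j) V) := by
    intro j
    by_cases hj : j ∈ degLE d γ
    · have hcd : ContDiffAt ℝ (M : ℕ) (c j) x0 :=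
        (hc j hj).of_le (by exact_mod_cast hMle)
      obtain ⟨u, hu, hcdu⟩ := hcd.contDiffOn le_rfl (by simp)
      obtain ⟨t, htu, hto, hxt⟩ := mem_nhds_iff.mp hu
      exact ⟨t, hto, hxt, fun _ => hcdu.mono htu⟩
    · exact ⟨Set.univ, isOpen_univ, trivial, fun h => absurd h hj⟩
  choose V hVo hVx hVc using hUj
  set U : Set (Fin d → ℝ) := ⋂ j ∈ degLE d γ, V j with hU
  have hUo : IsOpen U := isOpen_biInter_finset fun j _ => hVo j
  have hUx : x0 ∈ U := Set.mem_iInter₂.mpr fun j _ => hVx j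
  have hUsub : ∀ j ∈ degLE d γ, U ⊆ V j := fun j hj => Set.biInter_subset_of_mem hj
  have hGood : Good x0 M M (applyL γ c (fun x => eval x P))
      (applyL γ c (fun x => eval x T)) := by
    refine ⟨U, hUo, hUx,
      (degLE d γ).toList.map fun j => (c j, pdMPoly j P),
      (degLE d γ).toList.map fun j => (c j, pdMPoly j (T - P)), ?_, ?_, ?_, ?_, ?_⟩
    · intro pp hpp
      obtain ⟨j, hj, rfl⟩ := List.mem_map.mp hpp
      have hj' : j ∈ degLE d γ := Finset.mem_toList.mp hj
      exact (hVc j hj').mono (hUsub j hj')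
    · intro pp hpp
      obtain ⟨j, hj, rfl⟩ := List.mem_map.mp hpp
      have hj' : j ∈ degLE d γ := Finset.mem_toList.mp hj
      exact (hVc j hj').mono (hUsub j hj')
    · intro pp hpp
      obtain ⟨j, hj, rfl⟩ := List.mem_map.mp hpp
      have hj' : j ∈ degLE d γ := Finset.mem_toList.mp hj
      intro i hi
      show eval x0 (pdMPoly i (pdMPoly j (T - P))) = 0
      rw [pdMPoly_pdMPoly]
      apply vanish_Tpoly
      have hsum : (∑ g, ((j + i) : Fin d →₀ ℕ) g) = (∑ g, j g) + (∑ g, i g) := by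
        simp only [Finsupp.add_apply]
        rw [Finset.sum_add_distrib]
      have hjs : (∑ g, j g) ≤ γ := mem_degLE.mp hj'
      omega
    · intro x _
      rw [sumF_finset]
      unfold applyL
      apply Finset.sum_congr rfl
      intro j _
      rw [congrFun (pdMulti_eval j P) x]
    · intro x _
      rw [sumF_finset]
      unfold applyL
      rw [← Finset.sum_add_distrib]
      apply Finset.sum_congr rfl
      intro j _
      rw [congrFun (pdMulti_eval j T) x, congrFun (pdMulti_eval j P) x]
      have : pdMPoly j T = pdMPoly j P + pdMPoly j (T - P) := by
        rw [← pdMPoly_add]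
        congr 1
        ring
      rw [this, map_add]
      ring
  -- coefficients vanish
  have hcoef : ∀ i ∈ degLE d M, pdMulti i (applyL γ c (fun x => eval x T)) x0 = 0 := by
    intro i hi
    have him : (∑ g, i g) ≤ M := mem_degLE.mp hi
    rw [hGood.pdMulti_eq i him him]
    exact taylorFun_coeff_zero x0 (p - γ) _ hQT i (him.trans hMle)
  funext x
  show (∑ i ∈ degLE d M,
    (pdMulti i (applyL γ c (fun x => eval x T)) x0 / ∏ g, ((i g).factorial : ℝ))
      * ∏ g, (x g - x0 g) ^ i g) = 0
  apply Finset.sum_eq_zero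
  intro i hi
  rw [hcoef i hi, zero_div, zero_mul]
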